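/- Let τ_c be in the upper half-plane and k_c > 0, and define L = [[k_c·Re(τ_c)/Im(τ_c), -k_c/Im(τ_c)], [k_c·|τ_c|²/Im(τ_c), -k_c·Re(τ_c)/Im(τ_c)]]. For τ in the upper half-plane, define E(τ) = (1/2)·⟨u, L u⟩_J + (1/2)·⟨v, L v⟩_J, where u = (1/√(Im τ), Re τ/√(Im τ)), v = (0, Im τ/√(Im τ)), and ⟨(A,B), (Ã,B̃)⟩_J := A·B̃ - B·Ã applied as ⟨w, Lw⟩_J. Then E(τ) = k_c·|τ - τ_c|²/(2·Im(τ_c)·Im(τ)) + k_c. Consequently E(τ) ≥ k_c with equality if and only if τ = τ_c. -/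

import Mathlib

open Matrix

theorem stmt_3 (kc : ℝ) (τc : ℂ) (hkc : 0 < kc) (hτc : 0 < τc.im)
    (L : Matrix (Fin 2) (Fin 2) ℝ)
    (hL : L = !![kc * τc.re / τc.im, -kc / τc.im;
                 kc * Complex.normSq τc / τc.im, -kc * τc.re / τc.im])
    (τ : ℂ) (hτ : 0 < τ.im)
    (u v : Fin 2 → ℝ)
    (hu : u = ![1 / Real.sqrt τ.im, τ.re / Real.sqrt τ.im])
    (hv : v = ![0, τ.im / Real.sqrt τ.im])
    (Eτ : ℝ)
    (hE : Eτ = (1 / 2) * (u 0 * L.mulVec u 1 - u 1 * L.mulVec u 0)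
             + (1 / 2) * (v 0 * L.mulVec v 1 - v 1 * L.mulVec v 0)) :
    Eτ = kc * ‖τ - τc‖ ^ 2 / (2 * τc.im * τ.im) + kc ∧
    kc ≤ Eτ ∧ (Eτ = kc ↔ τ = τc) := by
  have hs : Real.sqrt τ.im ^ 2 = τ.im := Real.sq_sqrt hτ.le
  have hs0 : Real.sqrt τ.im ≠ 0 := by positivity
  have habs : ‖τ - τc‖ ^ 2 =
      (τ.re - τc.re) ^ 2 + (τ.im - τc.im) ^ 2 := by
    rw [Complex.sq_norm, Complex.normSq_apply]
    simp [Complex.sub_re, Complex.sub_im]; ring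
  have hnc : Complex.normSq τc = τc.re ^ 2 + τc.im ^ 2 := by
    rw [Complex.normSq_apply]; ring
  have hmain : Eτ = kc * ‖τ - τc‖ ^ 2 / (2 * τc.im * τ.im) + kc := by
    subst hL hu hv
    rw [hE, habs, hnc]
    simp only [Matrix.mulVec, dotProduct, Fin.sum_univ_two,
      Matrix.cons_val_zero, Matrix.cons_val_one, Matrix.head_cons,
      Matrix.cons_val', Matrix.empty_val', Matrix.cons_val_fin_one, Matrix.head_fin_const, Matrix.of_apply]
    rw [← hs]
    field_simp
    rw [Real.sqrt_sq (Real.sqrt_nonneg _)]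
    ring
  refine ⟨hmain, ?_, ?_⟩
  · rw [hmain]
    have : 0 ≤ kc * ‖τ - τc‖ ^ 2 / (2 * τc.im * τ.im) := by positivity
    linarith
  · rw [hmain]
    constructor
    · intro h
      have h0 : kc * ‖τ - τc‖ ^ 2 / (2 * τc.im * τ.im) = 0 := by linarith
      have : ‖τ - τc‖ = 0 := by
        by_contra hne
        have : 0 < kc * ‖τ - τc‖ ^ 2 / (2 * τc.im * τ.im) := by
          have := norm_nonneg (τ - τc)
          positivity
        linarith
      exact sub_eq_zero.mp (norm_eq_zero.mp this)
    · intro h; subst h; simp
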